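/- Let G = (V_L, V_R, E) be a bipartite graph with |V_L| = |V_R|, and let U be the CIR over schema {A, ?B} with one tuple per vertex v ∈ V_L, where U[v][A] = v and U[v][?B] is the uniform distribution over the neighbor set N_v of v (assume every vertex of V_L has at least one neighbor). Then the consistent samples of U with respect to the matching constraint {A → B, B → A} are in bijection with the perfect matchings of G, and the number of perfect matchings of G equals Pr_U({A→B, B→A}) · ∏_{v∈V_L} |N_v|. -/
import Mathlib


open Classical in
/-- Let `G = (V_L, V_R, E)` be a bipartite graph with `|V_L| = |V_R|` and every
left vertex having a neighbor, and let `U` be the CIR over `{A, ?B}` with one tuple per `v ∈ V_L`,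
`U[v][A] = v`, and `U[v][?B]` uniform over the neighbor set `N_v`.  Then the consistent samples of
`U` w.r.t. the matching constraint `{A → B, B → A}` are exactly (in bijection with) the perfect
matchings of `G`, and the number of perfect matchings equals
`Pr_U({A→B, B→A}) · ∏_{v∈V_L} |N_v|`.  (Since `A`-values are distinct, a sample satisfies the
matching constraint iff it is injective.) -/
theorem stmt3 {VL VR : Type} [Fintype VL] [Fintype VR] [DecidableEq VL] [DecidableEq VR]
    (hcard : Fintype.card VL = Fintype.card VR)
    (E : VL → VR → Prop)
    (hne : ∀ v : VL, ∃ w : VR, E v w) :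
    let Nv : VL → Finset VR := fun v => Finset.univ.filter (fun w => E v w)
    let p : VL → VR → ℝ := fun v w => if E v w then 1 / ((Nv v).card : ℝ) else 0
    -- the consistent samples coincide with the perfect matchings
    (Finset.univ.filter
        (fun r : VL → VR => 0 < ∏ v : VL, p v (r v) ∧ Function.Injective r)
      = Finset.univ.filter
        (fun M : VL → VR => Function.Bijective M ∧ ∀ v : VL, E v (M v)))
    -- counting: #PM = Pr_U(F) · ∏ |N_v|
    ∧ ((Finset.univ.filter
          (fun M : VL → VR => Function.Bijective M ∧ ∀ v : VL, E v (M v))).card : ℝ)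
        = (∑ r ∈ Finset.univ.filter (fun r : VL → VR => Function.Injective r),
            ∏ v : VL, p v (r v))
          * ∏ v : VL, ((Nv v).card : ℝ) := by
  intro Nv p
  have hNpos : ∀ v : VL, 0 < ((Nv v).card : ℝ) := by
    intro v
    obtain ⟨w, hw⟩ := hne v
    have : w ∈ Nv v := by simp [Nv, hw]
    have := Finset.card_pos.2 ⟨w, this⟩
    exact_mod_cast this
  have hp_pos : ∀ v w, E v w → 0 < p v w := by
    intro v w h
    simp only [p, if_pos h]
    exact one_div_pos.2 (hNpos v)
  have hp_zero : ∀ v w, ¬ E v w → p v w = 0 := by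
    intro v w h; simp [p, h]
  -- product is positive iff all edges present
  have hprod : ∀ r : VL → VR, (0 < ∏ v : VL, p v (r v)) ↔ ∀ v, E v (r v) := by
    intro r
    constructor
    · intro h v
      by_contra hE
      have : ∏ v : VL, p v (r v) = 0 :=
        Finset.prod_eq_zero (Finset.mem_univ v) (hp_zero v (r v) hE)
      rw [this] at h; exact lt_irrefl 0 h
    · intro h
      exact Finset.prod_pos fun v _ => hp_pos v (r v) (h v)
  have hbij : ∀ r : VL → VR, Function.Bijective r ↔ Function.Injective r := by
    intro r
    constructor
    · exact fun h => h.1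
    · intro h
      exact (Fintype.bijective_iff_injective_and_card r).2 ⟨h, hcard⟩
  constructor
  · ext r
    simp only [Finset.mem_filter, Finset.mem_univ, true_and]
    rw [hprod, hbij]
    tauto
  · -- counting
    have hval : ∀ r : VL → VR, (∀ v, E v (r v)) →
        ∏ v : VL, p v (r v) = ∏ v : VL, (1 / ((Nv v).card : ℝ)) := by
      intro r h
      exact Finset.prod_congr rfl fun v _ => by simp [p, h v]
    have hsum :
        (∑ r ∈ Finset.univ.filter (fun r : VL → VR => Function.Injective r),
            ∏ v : VL, p v (r v))
          = (∑ r ∈ Finset.univ.filter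
              (fun r : VL → VR => Function.Injective r ∧ ∀ v, E v (r v)),
            ∏ v : VL, (1 / ((Nv v).card : ℝ))) := by
      rw [← Finset.sum_filter_of_ne (f := fun r => ∏ v : VL, p v (r v))
        (p := fun r : VL → VR => ∀ v, E v (r v))]
      · rw [Finset.filter_filter]
        refine Finset.sum_congr rfl fun r hr => ?_
        simp only [Finset.mem_filter] at hr
        exact hval r hr.2.2
      · intro r hr hne0 v
        by_contra hE
        exact hne0 (Finset.prod_eq_zero (Finset.mem_univ v) (hp_zero v (r v) hE))
    have hfeq : Finset.univ.filter
          (fun r : VL → VR => Function.Injective r ∧ ∀ v, E v (r v))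
        = Finset.univ.filter
          (fun M : VL → VR => Function.Bijective M ∧ ∀ v : VL, E v (M v)) := by
      ext r
      simp only [Finset.mem_filter, Finset.mem_univ, true_and]
      rw [hbij]
    rw [hsum, hfeq, Finset.sum_const, nsmul_eq_mul]
    rw [mul_assoc, ← Finset.prod_mul_distrib]
    have : ∏ v : VL, (1 / ((Nv v).card : ℝ)) * ((Nv v).card : ℝ) = 1 := by
      refine Finset.prod_eq_one fun v _ => ?_
      exact one_div_mul_cancel (ne_of_gt (hNpos v))
    rw [this, mul_one]
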